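/- Let Z be a set and let h_1, …, h_k : Z → Z be maps such that any two of them commute and any two distinct ones *-commute. If m, n ∈ ℕ^k satisfy min(m_i, n_i) = 0 for every 1 ≤ i ≤ k, then the maps h^m := h_1^{m_1} ∘ ⋯ ∘ h_k^{m_k} and h^n := h_1^{n_1} ∘ ⋯ ∘ h_k^{n_k} commute and *-commute. -/

import Mathlib

/-- Maps `f, g : Z → Z` *-commute: they commute, and for every `x, y` with
`f x = g y` there is a unique `z` with `g z = x` and `f z = y`. -/
def StarCommute {Z : Type*} (f g : Z → Z) : Prop :=
  f ∘ g = g ∘ f ∧ ∀ x y : Z, f x = g y → ∃! z : Z, g z = x ∧ f z = y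

/-- `h^m = h 0 ^[m 0] ∘ ⋯ ∘ h (k-1) ^[m (k-1)]`. -/
def compIter {Z : Type*} {k : ℕ} (h : Fin k → Z → Z) (m : Fin k → ℕ) : Z → Z :=
  (List.ofFn fun i => (h i)^[m i]).foldr (· ∘ ·) id

theorem sc_symm {Z : Type*} {f g : Z → Z} (h : StarCommute f g) : StarCommute g f := by
  obtain ⟨hc, hs⟩ := h
  refine ⟨hc.symm, fun x y hxy => ?_⟩
  obtain ⟨z, ⟨h1, h2⟩, hu⟩ := hs y x hxy.symm
  exact ⟨z, ⟨h2, h1⟩, fun w hw => hu w ⟨hw.2, hw.1⟩⟩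

theorem sc_id_left {Z : Type*} (g : Z → Z) : StarCommute id g :=
  ⟨rfl, fun x y hxy => ⟨y, ⟨hxy.symm, rfl⟩, fun w hw => hw.2⟩⟩

theorem sc_id_right {Z : Type*} (g : Z → Z) : StarCommute g id :=
  sc_symm (sc_id_left g)

theorem sc_comp_right {Z : Type*} {f g g' : Z → Z} (hg : StarCommute f g)
    (hg' : StarCommute f g') : StarCommute f (g' ∘ g) := by
  obtain ⟨hgc, hgs⟩ := hg
  obtain ⟨hg'c, hg's⟩ := hg'
  constructor
  · calc f ∘ (g' ∘ g) = (f ∘ g') ∘ g := rfl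
      _ = (g' ∘ f) ∘ g := by rw [hg'c]
      _ = g' ∘ (f ∘ g) := rfl
      _ = g' ∘ (g ∘ f) := by rw [hgc]
      _ = (g' ∘ g) ∘ f := rfl
  · intro x y hxy
    obtain ⟨z1, ⟨hz1g, hz1f⟩, hu1⟩ := hg's x (g y) hxy
    obtain ⟨z, ⟨hzg, hzf⟩, hu⟩ := hgs z1 y hz1f
    refine ⟨z, ⟨?_, hzf⟩, ?_⟩
    · show g' (g z) = x
      rw [hzg]; exact hz1g
    · intro w hw
      have hfg : f (g w) = g y := by
        have h1 := congrFun hgc w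
        simp only [Function.comp_apply] at h1
        rw [h1, hw.2]
      have hgw : g w = z1 := hu1 (g w) ⟨hw.1, hfg⟩
      exact hu w ⟨hgw, hw.2⟩

theorem sc_comp_left {Z : Type*} {f f' g : Z → Z} (hf : StarCommute f g)
    (hf' : StarCommute f' g) : StarCommute (f' ∘ f) g :=
  sc_symm (sc_comp_right (sc_symm hf) (sc_symm hf'))

theorem sc_iterate_right {Z : Type*} {f g : Z → Z} (h : StarCommute f g) (n : ℕ) :
    StarCommute f g^[n] := by
  induction n with
  | zero => exact sc_id_right f
  | succ n ih =>
    rw [Function.iterate_succ']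
    exact sc_comp_right ih h

theorem sc_iterate_left {Z : Type*} {f g : Z → Z} (h : StarCommute f g) (n : ℕ) :
    StarCommute f^[n] g :=
  sc_symm (sc_iterate_right (sc_symm h) n)

theorem sc_foldr_right {Z : Type*} {f : Z → Z} :
    ∀ L : List (Z → Z), (∀ g ∈ L, StarCommute f g) →
      StarCommute f (L.foldr (· ∘ ·) id)
  | [], _ => sc_id_right f
  | g :: L, hL => by
    simp only [List.foldr_cons]
    exact sc_comp_right
      (sc_foldr_right L fun g' hg' => hL g' (List.mem_cons_of_mem _ hg'))
      (hL g List.mem_cons_self)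

theorem sc_foldr_left {Z : Type*} {g : Z → Z} (L : List (Z → Z))
    (hL : ∀ f ∈ L, StarCommute f g) : StarCommute (L.foldr (· ∘ ·) id) g :=
  sc_symm (sc_foldr_right L fun f hf => sc_symm (hL f hf))

/-- if the `h i` pairwise commute and distinct ones *-commute, and
`m ⊓ n = 0`, then `h^m` and `h^n` commute and *-commute. -/
theorem compIter_starCommute {Z : Type*} {k : ℕ} (h : Fin k → Z → Z)
    (hcomm : ∀ i j : Fin k, (h i) ∘ (h j) = (h j) ∘ (h i))
    (hstar : ∀ i j : Fin k, i ≠ j → StarCommute (h i) (h j))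
    (m n : Fin k → ℕ) (hmn : ∀ i, min (m i) (n i) = 0) :
    StarCommute (compIter h m) (compIter h n) := by
  unfold compIter
  apply sc_foldr_left
  intro f hf
  obtain ⟨i, rfl⟩ := List.mem_ofFn.mp hf
  apply sc_foldr_right
  intro g hg
  obtain ⟨j, rfl⟩ := List.mem_ofFn.mp hg
  by_cases hij : i = j
  · subst hij
    rcases Nat.min_eq_zero_iff.mp (hmn i) with h0 | h0
    · rw [h0]
      exact sc_id_left _
    · rw [h0]
      exact sc_id_right _
  · exact sc_iterate_left (sc_iterate_right (hstar i j hij) (n j)) (m i)
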